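/- The number of monic polynomials g ∈ ℤ[x] of degree 6 such that g is a product of cyclotomic polynomials, g(0) = 1, g has no common root with f(x) = (x−1)^6 (equivalently g(1) ≠ 0), and the pair (f, g) is a primitive pair, is exactly 40. -/

import Mathlib

open Polynomial

/-- `p` is a (finite, possibly repeated) product of cyclotomic polynomials `Φ_m`. -/
def IsCyclotomicProduct (p : Polynomial ℤ) : Prop :=
  ∃ s : Multiset ℕ, (∀ m ∈ s, 0 < m) ∧ p = (s.map fun m => Polynomial.cyclotomic m ℤ).prod

/-- `f, g` form a primitive pair: there are no `f₁, g₁ ∈ ℤ[x]` and `k ≥ 2` with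
`f(x) = f₁(x^k)` and `g(x) = g₁(x^k)`. -/
def IsPrimitivePair (f g : Polynomial ℤ) : Prop :=
  ¬ ∃ (k : ℕ) (f₁ g₁ : Polynomial ℤ), 2 ≤ k ∧
    f = f₁.comp (Polynomial.X ^ k) ∧ g = g₁.comp (Polynomial.X ^ k)

/-- The possible indices of cyclotomic factors. -/
def Tf : Finset ℕ := {2,3,4,5,6,7,8,9,10,12,14,18}

/-- The 40 admissible multisets of cyclotomic indices. -/
def Lf : Finset (Multiset ℕ) :=
 { {7},{9},{14},{18},
   {5,3},{5,4},{5,6},{8,3},{8,4},{8,6},{10,3},{10,4},{10,6},{12,3},{12,4},{12,6},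
   {5,2,2},{8,2,2},{10,2,2},{12,2,2},
   {3,3,3},{3,3,4},{3,3,6},{3,4,4},{3,4,6},{3,6,6},{4,4,4},{4,4,6},{4,6,6},{6,6,6},
   {3,3,2,2},{3,4,2,2},{3,6,2,2},{4,4,2,2},{4,6,2,2},{6,6,2,2},
   {3,2,2,2,2},{4,2,2,2,2},{6,2,2,2,2},
   {2,2,2,2,2,2} }

set_option maxRecDepth 40000 in
lemma mem_Tf {m : ℕ} (h2 : 2 ≤ m) (h6 : m.totient ≤ 6) : m ∈ Tf := by
  have hd : m ∣ 2520 := by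
    rw [Nat.dvd_iff_prime_pow_dvd_dvd]
    intro p k hp' hpk
    have hdvd : (p ^ k).totient ∣ m.totient := Nat.totient_dvd_of_dvd hpk
    have hle : (p ^ k).totient ≤ 6 :=
      le_trans (Nat.le_of_dvd (Nat.totient_pos.mpr (by omega)) hdvd) h6
    cases k with
    | zero => simpa using one_dvd _
    | succ j =>
      rw [Nat.totient_prime_pow hp' (Nat.succ_pos j), Nat.succ_sub_one] at hle
      have hp2 : 2 ≤ p := hp'.two_le
      have hpj : 1 ≤ p ^ j := Nat.one_le_pow _ _ (by omega)
      have hple : p - 1 ≤ 6 := by nlinarith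
      have hp7 : p ≤ 7 := by omega
      interval_cases p
      · have : 2 ^ j < 2 ^ 3 := by omega
        have hj : j < 3 := (Nat.pow_lt_pow_iff_right (by norm_num)).mp this
        exact dvd_trans (pow_dvd_pow 2 (by omega : j + 1 ≤ 3)) (by norm_num)
      · have : 3 ^ j < 3 ^ 2 := by omega
        have hj : j < 2 := (Nat.pow_lt_pow_iff_right (by norm_num)).mp this
        exact dvd_trans (pow_dvd_pow 3 (by omega : j + 1 ≤ 2)) (by norm_num)
      · exact absurd hp' (by norm_num)
      · have : 5 ^ j < 5 ^ 1 := by omega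
        have hj : j < 1 := (Nat.pow_lt_pow_iff_right (by norm_num)).mp this
        exact dvd_trans (pow_dvd_pow 5 (by omega : j + 1 ≤ 1)) (by norm_num)
      · exact absurd hp' (by norm_num)
      · have : 7 ^ j < 7 ^ 1 := by omega
        have hj : j < 1 := (Nat.pow_lt_pow_iff_right (by norm_num)).mp this
        exact dvd_trans (pow_dvd_pow 7 (by omega : j + 1 ≤ 1)) (by norm_num)
  have hm : m ∈ Nat.divisors 2520 := Nat.mem_divisors.mpr ⟨hd, by norm_num⟩
  exact (by decide : ∀ x ∈ Nat.divisors 2520, 2 ≤ x → Nat.totient x ≤ 6 → x ∈ Tf) m hm h2 h6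

set_option maxHeartbeats 2000000 in
lemma key (s : Multiset ℕ) (hT : ∀ m ∈ s, m ∈ Tf) (hsum : (s.map Nat.totient).sum = 6) :
    s ∈ Lf := by
  have hs : s = Multiset.replicate (Multiset.count 2 s) 2 + Multiset.replicate (Multiset.count 3 s) 3
      + Multiset.replicate (Multiset.count 4 s) 4 + Multiset.replicate (Multiset.count 5 s) 5
      + Multiset.replicate (Multiset.count 6 s) 6 + Multiset.replicate (Multiset.count 7 s) 7
      + Multiset.replicate (Multiset.count 8 s) 8 + Multiset.replicate (Multiset.count 9 s) 9
      + Multiset.replicate (Multiset.count 10 s) 10 + Multiset.replicate (Multiset.count 12 s) 12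
      + Multiset.replicate (Multiset.count 14 s) 14 + Multiset.replicate (Multiset.count 18 s) 18 := by
    rw [Multiset.ext]
    intro a
    by_cases h : a ∈ Tf
    · fin_cases h <;> simp [Multiset.count_replicate]
    · have h0 : Multiset.count a s = 0 :=
        Multiset.count_eq_zero.mpr (fun hm => h (hT a hm))
      simp only [Tf, Finset.mem_insert, Finset.mem_singleton, not_or] at h
      obtain ⟨u2,u3,u4,u5,u6,u7,u8,u9,u10,u12,u14,u18⟩ := h
      simp [Multiset.count_replicate, h0, eq_comm, u2,u3,u4,u5,u6,u7,u8,u9,u10,u12,u14,u18]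
  rw [hs] at hsum
  simp only [Multiset.map_add, Multiset.map_replicate, Multiset.sum_add,
    Multiset.sum_replicate, smul_eq_mul,
    show Nat.totient 2 = 1 from by decide, show Nat.totient 3 = 2 from by decide,
    show Nat.totient 4 = 2 from by decide, show Nat.totient 5 = 4 from by decide,
    show Nat.totient 6 = 2 from by decide, show Nat.totient 7 = 6 from by decide,
    show Nat.totient 8 = 4 from by decide, show Nat.totient 9 = 6 from by decide,
    show Nat.totient 10 = 4 from by decide, show Nat.totient 12 = 4 from by decide,
    show Nat.totient 14 = 6 from by decide, show Nat.totient 18 = 6 from by decide] at hsum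
  generalize hc2 : Multiset.count 2 s = n2 at hs hsum
  generalize hc3 : Multiset.count 3 s = n3 at hs hsum
  generalize hc4 : Multiset.count 4 s = n4 at hs hsum
  generalize hc5 : Multiset.count 5 s = n5 at hs hsum
  generalize hc6 : Multiset.count 6 s = n6 at hs hsum
  generalize hc7 : Multiset.count 7 s = n7 at hs hsum
  generalize hc8 : Multiset.count 8 s = n8 at hs hsum
  generalize hc9 : Multiset.count 9 s = n9 at hs hsum
  generalize hc10 : Multiset.count 10 s = n10 at hs hsum
  generalize hc12 : Multiset.count 12 s = n12 at hs hsum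
  generalize hc14 : Multiset.count 14 s = n14 at hs hsum
  generalize hc18 : Multiset.count 18 s = n18 at hs hsum
  clear hc2 hc3 hc4 hc5 hc6 hc7 hc8 hc9 hc10 hc12 hc14 hc18 hT
  rcases (show n7 = 0 ∨ n7 = 1 by omega) with rfl | rfl <;> try (exfalso; omega)
  all_goals rcases (show n9 = 0 ∨ n9 = 1 by omega) with rfl | rfl <;> try (exfalso; omega)
  all_goals rcases (show n14 = 0 ∨ n14 = 1 by omega) with rfl | rfl <;> try (exfalso; omega)
  all_goals rcases (show n18 = 0 ∨ n18 = 1 by omega) with rfl | rfl <;> try (exfalso; omega)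
  all_goals rcases (show n5 = 0 ∨ n5 = 1 by omega) with rfl | rfl <;> try (exfalso; omega)
  all_goals rcases (show n8 = 0 ∨ n8 = 1 by omega) with rfl | rfl <;> try (exfalso; omega)
  all_goals rcases (show n10 = 0 ∨ n10 = 1 by omega) with rfl | rfl <;> try (exfalso; omega)
  all_goals rcases (show n12 = 0 ∨ n12 = 1 by omega) with rfl | rfl <;> try (exfalso; omega)
  all_goals rcases (show n3 = 0 ∨ n3 = 1 ∨ n3 = 2 ∨ n3 = 3 by omega) with rfl | rfl | rfl | rfl <;> try (exfalso; omega)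
  all_goals rcases (show n4 = 0 ∨ n4 = 1 ∨ n4 = 2 ∨ n4 = 3 by omega) with rfl | rfl | rfl | rfl <;> try (exfalso; omega)
  all_goals rcases (show n6 = 0 ∨ n6 = 1 ∨ n6 = 2 ∨ n6 = 3 by omega) with rfl | rfl | rfl | rfl <;> try (exfalso; omega)
  all_goals rcases (show n2 = 0 ∨ n2 = 1 ∨ n2 = 2 ∨ n2 = 3 ∨ n2 = 4 ∨ n2 = 5 ∨ n2 = 6 by omega) with rfl|rfl|rfl|rfl|rfl|rfl|rfl <;> try (exfalso; omega)
  all_goals rw [hs]; decide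

lemma prim_aux (g : Polynomial ℤ) : IsPrimitivePair ((Polynomial.X - 1) ^ 6) g := by
  rintro ⟨k, f₁, g₁, hk, hf, -⟩
  have hk0 : 0 < k := by omega
  rw [← Polynomial.expand_eq_comp_X_pow] at hf
  have hC : ((X : Polynomial ℤ) - 1) = X - C 1 := by rw [C_1]
  have hmon : (((X : Polynomial ℤ) - C 1) ^ 6).Monic := (monic_X_sub_C (1:ℤ)).pow 6
  have hnd : (((X : Polynomial ℤ) - C 1) ^ 6).natDegree = 6 := by
    rw [natDegree_pow, natDegree_X_sub_C]
  have h5 : (((X : Polynomial ℤ) - C 1) ^ 6).coeff 5 = -6 := by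
    have h := Polynomial.Monic.nextCoeff_pow (monic_X_sub_C (1:ℤ)) 6
    rw [nextCoeff_X_sub_C] at h
    rw [nextCoeff_of_natDegree_pos (by rw [hnd]; norm_num), hnd] at h
    simpa using h
  have h6 : (((X : Polynomial ℤ) - C 1) ^ 6).coeff 6 = 1 := by
    have := hmon.coeff_natDegree
    rwa [hnd] at this
  rw [hC] at hf
  have hc5 : ((Polynomial.expand ℤ k f₁).coeff 5 : ℤ) = -6 := by rw [← hf]; exact h5
  rw [Polynomial.coeff_expand hk0] at hc5
  have hk5 : k ∣ 5 := by
    by_contra h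
    rw [if_neg h] at hc5
    norm_num at hc5
  have hk5' : k = 5 := by
    rcases (Nat.Prime.eq_one_or_self_of_dvd (by norm_num) k hk5) with h | h <;> omega
  subst hk5'
  have hc6 : ((Polynomial.expand ℤ 5 f₁).coeff 6 : ℤ) = 1 := by rw [← hf]; exact h6
  rw [Polynomial.coeff_expand (by norm_num), if_neg (by norm_num)] at hc6
  norm_num at hc6

lemma inj_aux {s t : Multiset ℕ} (hs : ∀ m ∈ s, 0 < m) (ht : ∀ m ∈ t, 0 < m)
    (h : (s.map fun m => Polynomial.cyclotomic m ℤ).prod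
       = (t.map fun m => Polynomial.cyclotomic m ℤ).prod) : s = t := by
  have h1 : Multiset.Rel Associated (s.map fun m => Polynomial.cyclotomic m ℤ)
      (t.map fun m => Polynomial.cyclotomic m ℤ) := by
    refine UniqueFactorizationMonoid.factors_unique ?_ ?_ (by rw [h]; exact Associated.refl _)
    · rintro p hp
      obtain ⟨m, hm, rfl⟩ := Multiset.mem_map.mp hp
      exact Polynomial.cyclotomic.irreducible (hs m hm)
    · rintro p hp
      obtain ⟨m, hm, rfl⟩ := Multiset.mem_map.mp hp
      exact Polynomial.cyclotomic.irreducible (ht m hm)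
  rw [Multiset.rel_map] at h1
  have h2 : Multiset.Rel (· = ·) s t := by
    refine h1.mono ?_
    intro a _ b _ hab
    exact Polynomial.cyclotomic_injective
      (Polynomial.eq_of_monic_of_associated (Polynomial.cyclotomic.monic a ℤ)
        (Polynomial.cyclotomic.monic b ℤ) hab)
  exact Multiset.rel_eq.mp h2

lemma props_aux (s : Multiset ℕ) (h2 : ∀ m ∈ s, 2 ≤ m)
    (hsum : (s.map Nat.totient).sum = 6) :
    ((s.map fun m => Polynomial.cyclotomic m ℤ).prod).Monic ∧
    ((s.map fun m => Polynomial.cyclotomic m ℤ).prod).natDegree = 6 ∧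
    ((s.map fun m => Polynomial.cyclotomic m ℤ).prod).coeff 0 = 1 ∧
    ((s.map fun m => Polynomial.cyclotomic m ℤ).prod).eval 1 ≠ 0 := by
  refine ⟨Polynomial.monic_multiset_prod_of_monic s _ (fun m _ => Polynomial.cyclotomic.monic m ℤ), ?_, ?_, ?_⟩
  · rw [Polynomial.natDegree_multiset_prod_of_monic]
    · rw [Multiset.map_map]
      rw [show ((Polynomial.natDegree ∘ fun m => Polynomial.cyclotomic m ℤ)) =
        Nat.totient from funext fun m => Polynomial.natDegree_cyclotomic m ℤ]
      exact hsum
    · intro f hf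
      obtain ⟨m, _, rfl⟩ := Multiset.mem_map.mp hf
      exact Polynomial.cyclotomic.monic m ℤ
  · rw [Polynomial.coeff_zero_eq_eval_zero, Polynomial.eval_multiset_prod, Multiset.map_map]
    refine Multiset.prod_eq_one ?_
    intro x hx
    obtain ⟨m, hm, rfl⟩ := Multiset.mem_map.mp hx
    simp only [Function.comp_apply]
    rw [← Polynomial.coeff_zero_eq_eval_zero, Polynomial.cyclotomic_coeff_zero ℤ (h2 m hm)]
  · rw [Polynomial.eval_multiset_prod, Multiset.map_map]
    refine Multiset.prod_ne_zero ?_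
    intro h0
    obtain ⟨m, hm, hv⟩ := Multiset.mem_map.mp h0
    simp only [Function.comp_apply] at hv
    rcases eq_or_lt_of_le (h2 m hm) with h | h
    · rw [← h, Polynomial.cyclotomic_two] at hv
      norm_num at hv
    · exact absurd hv (ne_of_gt (Polynomial.cyclotomic_pos h 1))

set_option maxRecDepth 40000 in
theorem count_forty :
    {g : Polynomial ℤ | g.Monic ∧ g.natDegree = 6 ∧ IsCyclotomicProduct g ∧
      g.coeff 0 = 1 ∧ g.eval 1 ≠ 0 ∧
      IsPrimitivePair ((Polynomial.X - 1) ^ 6) g}.ncard = 40 := by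
  have hL2 : ∀ s ∈ Lf, ∀ m ∈ s, 2 ≤ m := by decide
  have hLsum : ∀ s ∈ Lf, (Multiset.map Nat.totient s).sum = 6 := by decide
  have hset : {g : Polynomial ℤ | g.Monic ∧ g.natDegree = 6 ∧ IsCyclotomicProduct g ∧
      g.coeff 0 = 1 ∧ g.eval 1 ≠ 0 ∧ IsPrimitivePair ((Polynomial.X - 1) ^ 6) g}
      = (fun s : Multiset ℕ => (s.map fun m => Polynomial.cyclotomic m ℤ).prod) '' ↑Lf := by
    ext g
    constructor
    · rintro ⟨hmon, hdeg, ⟨s, hpos, rfl⟩, h0, h1, hprim⟩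
      have h2 : ∀ m ∈ s, 2 ≤ m := by
        intro m hm
        rcases eq_or_lt_of_le (Nat.succ_le_of_lt (hpos m hm) : 1 ≤ m) with h | h
        · exfalso
          apply h1
          rw [Polynomial.eval_multiset_prod, Multiset.map_map]
          refine Multiset.prod_eq_zero ?_
          refine Multiset.mem_map.mpr ⟨m, hm, ?_⟩
          rw [Function.comp_apply, ← h, Polynomial.cyclotomic_one]
          simp
        · exact h
      have hdeg' : (s.map Nat.totient).sum = 6 := by
        rw [Polynomial.natDegree_multiset_prod_of_monic] at hdeg
        · rw [Multiset.map_map] at hdeg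
          rw [show ((Polynomial.natDegree ∘ fun m => Polynomial.cyclotomic m ℤ)) =
            Nat.totient from funext fun m => Polynomial.natDegree_cyclotomic m ℤ] at hdeg
          exact hdeg
        · intro f hf
          obtain ⟨m, _, rfl⟩ := Multiset.mem_map.mp hf
          exact Polynomial.cyclotomic.monic m ℤ
      refine ⟨s, ?_, rfl⟩
      refine Finset.mem_coe.mpr (key s ?_ hdeg')
      intro m hm
      refine mem_Tf (h2 m hm) ?_
      rw [← hdeg']
      exact Multiset.single_le_sum (fun x _ => Nat.zero_le x) _
        (Multiset.mem_map_of_mem _ hm)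
    · rintro ⟨s, hsL, rfl⟩
      have hsL' : s ∈ Lf := Finset.mem_coe.mp hsL
      obtain ⟨hmon, hdeg, h0, h1⟩ := props_aux s (hL2 s hsL') (hLsum s hsL')
      exact ⟨hmon, hdeg, ⟨s, fun m hm => by have := hL2 s hsL' m hm; omega, rfl⟩, h0, h1,
        prim_aux _⟩
  rw [hset]
  rw [Set.ncard_image_of_injOn ?_, Set.ncard_coe_finset]
  · decide
  · intro s hsm t htm h
    exact inj_aux (fun m hm => by have := hL2 s (Finset.mem_coe.mp hsm) m hm; omega)
      (fun m hm => by have := hL2 t (Finset.mem_coe.mp htm) m hm; omega) h
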